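/- The quasi-metric space Q(4) has exactly three distinct lines, namely {p,q,r}, {p,q,s} and {r,s}, and none of these lines is universal. In particular Q(4) does not have the de Bruijn–Erdős property. -/
import Mathlib


/-- A quasi-metric on `V`: nonnegative, vanishing exactly on the diagonal,
and satisfying the (directed) triangle inequality. -/
def IsQuasiMetric {V : Type*} (d : V → V → ℝ) : Prop :=
  (∀ x y, 0 ≤ d x y) ∧ (∀ x y, d x y = 0 ↔ x = y) ∧ (∀ x y z, d x z ≤ d x y + d y z)

/-- Betweenness: `y` lies between `x` and `z` (all three pairwise distinct). -/
def BtwQM {V : Type*} (d : V → V → ℝ) (x y z : V) : Prop :=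
  x ≠ y ∧ y ≠ z ∧ x ≠ z ∧ d x z = d x y + d y z

/-- The line through `x` and `y`. -/
def lineQM {V : Type*} (d : V → V → ℝ) (x y : V) : Set V :=
  {z | d z y = d z x + d x y ∨ d x y = d x z + d z y ∨ d x z = d x y + d y z}

/-- The set of all lines of the space. -/
def linesQM {V : Type*} (d : V → V → ℝ) : Set (Set V) :=
  {ℓ | ∃ x y, x ≠ y ∧ ℓ = lineQM d x y}

/-- The four points of the space `Q(4)`. -/
inductive P4 : Type
  | p | s | q | r
deriving DecidableEq

open P4

/-- The quasi-metric of the space `Q(4)`. -/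
def dQ4 : P4 → P4 → ℝ
  | p, p => 0 | p, s => 1 | p, q => 1 | p, r => 3
  | s, p => 3 | s, s => 0 | s, q => 2 | s, r => 3
  | q, p => 1 | q, s => 2 | q, q => 0 | q, r => 2
  | r, p => 1 | r, s => 1 | r, q => 2 | r, r => 0

/-- The betweenness of `Q(4)`. -/
def BQ4 : Set (P4 × P4 × P4) := {(p, q, r), (r, p, q), (s, q, p), (q, p, s)}

lemma line_ps : lineQM dQ4 p s = {p, q, s} := by
  ext z; cases z <;> simp [lineQM, dQ4] <;> norm_num

lemma line_pq : lineQM dQ4 p q = {p, q, r} := by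
  ext z; cases z <;> simp [lineQM, dQ4] <;> norm_num

lemma line_pr : lineQM dQ4 p r = {p, q, r} := by
  ext z; cases z <;> simp [lineQM, dQ4] <;> norm_num

lemma line_sp : lineQM dQ4 s p = {p, q, s} := by
  ext z; cases z <;> simp [lineQM, dQ4] <;> norm_num

lemma line_sq : lineQM dQ4 s q = {p, q, s} := by
  ext z; cases z <;> simp [lineQM, dQ4] <;> norm_num

lemma line_sr : lineQM dQ4 s r = {r, s} := by
  ext z; cases z <;> simp [lineQM, dQ4] <;> norm_num

lemma line_qp : lineQM dQ4 q p = {p, q, s} := by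
  ext z; cases z <;> simp [lineQM, dQ4] <;> norm_num

lemma line_qs : lineQM dQ4 q s = {p, q, s} := by
  ext z; cases z <;> simp [lineQM, dQ4] <;> norm_num

lemma line_qr : lineQM dQ4 q r = {p, q, r} := by
  ext z; cases z <;> simp [lineQM, dQ4] <;> norm_num

lemma line_rp : lineQM dQ4 r p = {p, q, r} := by
  ext z; cases z <;> simp [lineQM, dQ4] <;> norm_num

lemma line_rs : lineQM dQ4 r s = {r, s} := by
  ext z; cases z <;> simp [lineQM, dQ4] <;> norm_num

lemma line_rq : lineQM dQ4 r q = {p, q, r} := by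
  ext z; cases z <;> simp [lineQM, dQ4] <;> norm_num

lemma lines_eq : linesQM dQ4 = {({p, q, r} : Set P4), {p, q, s}, {r, s}} := by
  ext ℓ
  constructor
  · rintro ⟨x, y, hxy, rfl⟩
    cases x <;> cases y <;>
      first
        | exact absurd rfl hxy
        | simp [line_ps, line_pq, line_pr, line_sp, line_sq, line_sr,
            line_qp, line_qs, line_qr, line_rp, line_rs, line_rq]
  · intro h
    simp only [Set.mem_insert_iff, Set.mem_singleton_iff] at h
    rcases h with rfl | rfl | rfl
    · exact ⟨p, q, by simp, line_pq.symm⟩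
    · exact ⟨p, s, by simp, line_ps.symm⟩
    · exact ⟨r, s, by simp, line_rs.symm⟩

/-- `Q(4)` has exactly the three lines `{p,q,r}`, `{p,q,s}` and `{r,s}`,
none of which is universal; in particular `Q(4)` fails the de Bruijn–Erdős property. -/
theorem stmt_2 :
    linesQM dQ4 = {({p, q, r} : Set P4), {p, q, s}, {r, s}} ∧
    (∀ ℓ ∈ linesQM dQ4, ℓ ≠ (Set.univ : Set P4)) ∧
    ¬ ((∃ x y : P4, x ≠ y ∧ lineQM dQ4 x y = Set.univ) ∨ 4 ≤ (linesQM dQ4).ncard) := by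
  have hnu : ∀ ℓ ∈ linesQM dQ4, ℓ ≠ (Set.univ : Set P4) := by
    rw [lines_eq]
    rintro ℓ (rfl | rfl | rfl) h
    · have : s ∈ ({p, q, r} : Set P4) := h.symm ▸ Set.mem_univ s
      simp at this
    · have : r ∈ ({p, q, s} : Set P4) := h.symm ▸ Set.mem_univ r
      simp at this
    · have : P4.p ∈ ({r, s} : Set P4) := h.symm ▸ Set.mem_univ P4.p
      simp at this
  refine ⟨lines_eq, hnu, ?_⟩
  rintro (⟨x, y, hxy, h⟩ | h4)
  · exact hnu _ ⟨x, y, hxy, rfl⟩ h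
  · rw [lines_eq] at h4
    have h1 : ({({p, q, r} : Set P4), {p, q, s}, {r, s}} : Set (Set P4)).ncard ≤ 3 := by
      calc ({({p, q, r} : Set P4), {p, q, s}, {r, s}} : Set (Set P4)).ncard
          ≤ ({({p, q, s} : Set P4), {r, s}} : Set (Set P4)).ncard + 1 :=
            Set.ncard_insert_le _ _
        _ ≤ (({({r, s} : Set P4)} : Set (Set P4)).ncard + 1) + 1 := by
            gcongr; exact Set.ncard_insert_le _ _
        _ = 3 := by rw [Set.ncard_singleton]
    omega
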